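/- Let X be a Banach space and φ : X → ℝ ∪ {+∞} a convex lower semicontinuous function, x̄ ∈ dom φ. Then the strong slope |∇φ|(x̄) := limsup_{x→x̄, x≠x̄} (φ(x̄) − φ(x))⁺ / ‖x − x̄‖ equals dist(0*, ∂φ(x̄)) = inf { ‖x*‖ : x* ∈ ∂φ(x̄) } (with the convention inf ∅ = +∞). -/

import Mathlib

open Metric Set Filter Topology

/-- Existence of a subgradient of norm at most `s` for a convex function admitting
the global lower bound `φ x ≥ φ xb - s * ‖x - xb‖`. -/
lemma exists_subgradient_aux
    {X : Type*} [NormedAddCommGroup X] [NormedSpace ℝ X]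
    (φ : X → EReal) (xb : X) (r s : ℝ) (hs : 0 ≤ s)
    (hφb : φ xb = (r : EReal))
    (hconv : ∀ x y : X, ∀ t : ℝ, 0 ≤ t → t ≤ 1 →
      φ (t • x + (1 - t) • y) ≤ (t : EReal) * φ x + ((1 - t : ℝ) : EReal) * φ y)
    (hlow : ∀ x, ((r - s * ‖x - xb‖ : ℝ) : EReal) ≤ φ x) :
    ∃ xs : StrongDual ℝ X, ‖xs‖ ≤ s ∧
      ∀ x, ((xs (x - xb) : ℝ) : EReal) ≤ φ x - φ xb := by
  classical
  set D : Set X := {w | φ (xb + w) ≠ ⊤} with hD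
  have hD0 : (0 : X) ∈ D := by
    simp only [hD, mem_setOf_eq, add_zero, hφb]
    exact EReal.coe_ne_top r
  set g : X → ℝ := fun w => (φ (xb + w)).toReal - r with hgdef
  have hbotw : ∀ w : X, φ (xb + w) ≠ ⊥ := by
    intro w h
    have := hlow (xb + w)
    rw [h] at this
    exact (EReal.coe_ne_bot _) (le_bot_iff.1 this)
  have hg : ∀ w ∈ D, φ (xb + w) = ((g w + r : ℝ) : EReal) := by
    intro w hw
    have := EReal.coe_toReal hw (hbotw w)
    rw [hgdef]
    simp only [sub_add_cancel]
    exact this.symm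
  have hg0 : g 0 = 0 := by
    simp [hgdef, hφb]
  have hglb : ∀ w ∈ D, -(s * ‖w‖) ≤ g w := by
    intro w hw
    have h1 := hlow (xb + w)
    rw [hg w hw] at h1
    have h2 : r - s * ‖xb + w - xb‖ ≤ g w + r := EReal.coe_le_coe_iff.1 h1
    have : ‖xb + w - xb‖ = ‖w‖ := by congr 1; abel
    rw [this] at h2
    linarith
  set q : X → X → ℝ := fun v w => g w + s * ‖v - w‖ with hqdef
  have hqlb : ∀ v : X, ∀ w ∈ D, -(s * ‖v‖) ≤ q v w := by
    intro v w hw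
    have h1 := hglb w hw
    have h2 : ‖w‖ ≤ ‖v - w‖ + ‖v‖ := by
      calc ‖w‖ = ‖v - (v - w)‖ := by congr 1; abel
        _ ≤ ‖v‖ + ‖v - w‖ := norm_sub_le _ _
        _ = ‖v - w‖ + ‖v‖ := by ring
    have h3 : -(s * ‖v‖) ≤ -(s * ‖w‖) + s * ‖v - w‖ := by nlinarith
    calc -(s * ‖v‖) ≤ -(s * ‖w‖) + s * ‖v - w‖ := h3
      _ ≤ g w + s * ‖v - w‖ := by linarith
  have hne : ∀ v : X, ((q v) '' D).Nonempty := fun v => ⟨q v 0, ⟨0, hD0, rfl⟩⟩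
  have hbdd : ∀ v : X, BddBelow ((q v) '' D) := by
    intro v
    exact ⟨-(s * ‖v‖), by rintro y ⟨w, hw, rfl⟩; exact hqlb v w hw⟩
  set p : X → ℝ := fun v => sInf ((q v) '' D) with hpdef
  have hple : ∀ v : X, ∀ w ∈ D, p v ≤ q v w := by
    intro v w hw
    exact csInf_le (hbdd v) ⟨w, hw, rfl⟩
  have hplb : ∀ v : X, -(s * ‖v‖) ≤ p v := by
    intro v
    apply le_csInf (hne v)
    rintro y ⟨w, hw, rfl⟩
    exact hqlb v w hw
  have hpub : ∀ v : X, p v ≤ s * ‖v‖ := by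
    intro v
    have := hple v 0 hD0
    simpa [hqdef, hg0] using this
  have hp0 : p 0 = 0 := by
    have h1 := hplb 0
    have h2 := hpub 0
    simp only [norm_zero, mul_zero, neg_zero] at h1 h2
    linarith
  have hpg : ∀ w ∈ D, p w ≤ g w := by
    intro w hw
    have := hple w w hw
    simpa [hqdef] using this
  -- convexity of p
  have hDconv : ∀ w₁ ∈ D, ∀ w₂ ∈ D, ∀ a b : ℝ, 0 ≤ a → 0 ≤ b → a + b = 1 →
      (a • w₁ + b • w₂ ∈ D ∧ g (a • w₁ + b • w₂) ≤ a * g w₁ + b * g w₂) := by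
    intro w₁ hw₁ w₂ hw₂ a b ha hb hab
    have hb' : b = 1 - a := by linarith
    have ha1 : a ≤ 1 := by linarith
    have hc := hconv (xb + w₁) (xb + w₂) a ha ha1
    have heq : a • (xb + w₁) + (1 - a) • (xb + w₂) = xb + (a • w₁ + b • w₂) := by
      rw [hb']; module
    rw [heq, hg w₁ hw₁, hg w₂ hw₂] at hc
    have hc2 : φ (xb + (a • w₁ + b • w₂)) ≤ ((a * (g w₁ + r) + (1 - a) * (g w₂ + r) : ℝ) : EReal) := by
      refine hc.trans_eq ?_
      rw [← EReal.coe_mul, ← EReal.coe_mul, ← EReal.coe_add]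
    have hmemD : a • w₁ + b • w₂ ∈ D := by
      intro htop
      rw [htop] at hc2
      exact (EReal.coe_ne_top _) (top_le_iff.1 hc2)
    refine ⟨hmemD, ?_⟩
    rw [hg _ hmemD] at hc2
    have hfin := EReal.coe_le_coe_iff.1 hc2
    have hexp : a * (g w₁ + r) + (1 - a) * (g w₂ + r) = a * g w₁ + b * g w₂ + r := by
      rw [hb']; ring
    linarith [hfin, hexp.le, hexp.ge]
  have hpconv : ∀ v₁ v₂ : X, ∀ a b : ℝ, 0 ≤ a → 0 ≤ b → a + b = 1 →
      p (a • v₁ + b • v₂) ≤ a * p v₁ + b * p v₂ := by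
    intro v₁ v₂ a b ha hb hab
    refine le_of_forall_pos_le_add ?_
    intro ε hε
    obtain ⟨y₁, ⟨w₁, hw₁, rfl⟩, hy₁⟩ := exists_lt_of_csInf_lt (hne v₁) (show p v₁ < p v₁ + ε by linarith)
    obtain ⟨y₂, ⟨w₂, hw₂, rfl⟩, hy₂⟩ := exists_lt_of_csInf_lt (hne v₂) (show p v₂ < p v₂ + ε by linarith)
    obtain ⟨hmem, hgc⟩ := hDconv w₁ hw₁ w₂ hw₂ a b ha hb hab
    have hnorm : ‖(a • v₁ + b • v₂) - (a • w₁ + b • w₂)‖ ≤ a * ‖v₁ - w₁‖ + b * ‖v₂ - w₂‖ := by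
      have : (a • v₁ + b • v₂) - (a • w₁ + b • w₂) = a • (v₁ - w₁) + b • (v₂ - w₂) := by module
      rw [this]
      calc ‖a • (v₁ - w₁) + b • (v₂ - w₂)‖ ≤ ‖a • (v₁ - w₁)‖ + ‖b • (v₂ - w₂)‖ := norm_add_le _ _
        _ = a * ‖v₁ - w₁‖ + b * ‖v₂ - w₂‖ := by
            rw [norm_smul, norm_smul, Real.norm_eq_abs, Real.norm_eq_abs, abs_of_nonneg ha, abs_of_nonneg hb]
    have hkey : p (a • v₁ + b • v₂) ≤ q (a • v₁ + b • v₂) (a • w₁ + b • w₂) := hple _ _ hmem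
    have : q (a • v₁ + b • v₂) (a • w₁ + b • w₂) ≤ a * (q v₁ w₁) + b * (q v₂ w₂) := by
      simp only [hqdef]
      nlinarith [mul_le_mul_of_nonneg_left hnorm hs]
    have h2 : a * (q v₁ w₁) + b * (q v₂ w₂) ≤ a * (p v₁ + ε) + b * (p v₂ + ε) := by
      have := mul_le_mul_of_nonneg_left hy₁.le ha
      have := mul_le_mul_of_nonneg_left hy₂.le hb
      nlinarith
    calc p (a • v₁ + b • v₂) ≤ a * (q v₁ w₁) + b * (q v₂ w₂) := hkey.trans this
      _ ≤ a * (p v₁ + ε) + b * (p v₂ + ε) := h2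
      _ = a * p v₁ + b * p v₂ + ε := by nlinarith [hab]
  -- p is Lipschitz hence continuous
  have hlip : ∀ u v : X, p u ≤ p v + s * ‖u - v‖ := by
    intro u v
    have : p u - s * ‖u - v‖ ≤ p v := by
      apply le_csInf (hne v)
      rintro y ⟨w, hw, rfl⟩
      have h1 : p u ≤ q u w := hple u w hw
      have h2 : ‖u - w‖ ≤ ‖v - w‖ + ‖u - v‖ := by
        calc ‖u - w‖ = ‖(u - v) + (v - w)‖ := by congr 1; abel
          _ ≤ ‖u - v‖ + ‖v - w‖ := norm_add_le _ _
          _ = ‖v - w‖ + ‖u - v‖ := by ring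
      simp only [hqdef] at h1 ⊢
      nlinarith
    linarith
  have hcont : Continuous p := by
    have : LipschitzWith (Real.toNNReal s) p := by
      apply LipschitzWith.of_dist_le_mul
      intro u v
      rw [Real.dist_eq, Real.coe_toNNReal s hs]
      rw [abs_le]
      constructor
      · have := hlip v u
        have hd : dist u v = ‖v - u‖ := by rw [dist_eq_norm]; exact norm_sub_rev _ _
        rw [hd]; linarith
      · have := hlip u v
        rw [dist_eq_norm]; linarith
    exact this.continuous
  -- separation
  set U : Set (X × ℝ) := {z | p z.1 < z.2} with hU
  have hUopen : IsOpen U := isOpen_lt (hcont.comp continuous_fst) continuous_snd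
  have hUconv : Convex ℝ U := by
    rintro ⟨v₁, c₁⟩ h₁ ⟨v₂, c₂⟩ h₂ a b ha hb hab
    simp only [hU, mem_setOf_eq] at h₁ h₂ ⊢
    have := hpconv v₁ v₂ a b ha hb hab
    simp only [Prod.smul_mk, Prod.mk_add_mk, smul_eq_mul]
    calc p (a • v₁ + b • v₂) ≤ a * p v₁ + b * p v₂ := this
      _ < a * c₁ + b * c₂ := by
          rcases eq_or_lt_of_le ha with rfl | ha'
          · have hb1 : b = 1 := by linarith
            simp only [zero_mul, zero_add]
            exact mul_lt_mul_of_pos_left h₂ (by linarith)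
          · rcases eq_or_lt_of_le hb with rfl | hb'
            · have ha1 : a = 1 := by linarith
              simp only [zero_mul, add_zero]
              exact mul_lt_mul_of_pos_left h₁ ha'
            · have := mul_lt_mul_of_pos_left h₁ ha'
              have := mul_lt_mul_of_pos_left h₂ hb'
              linarith
  have hU0 : ((0 : X), (0 : ℝ)) ∉ U := by
    simp only [hU, mem_setOf_eq, hp0]
    exact lt_irrefl 0
  obtain ⟨f, hf⟩ := geometric_hahn_banach_point_open hUconv hUopen hU0
  have hf0 : f (0, 0) = 0 := by
    have : ((0 : X), (0 : ℝ)) = (0 : X × ℝ) := rfl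
    rw [this, map_zero]
  set β : ℝ := f (0, 1) with hβdef
  have hsplit : ∀ (v : X) (c : ℝ), f (v, c) = f (v, 0) + c * β := by
    intro v c
    have : (v, c) = (v, (0 : ℝ)) + c • ((0 : X), (1 : ℝ)) := by
      simp [Prod.ext_iff]
    rw [this, map_add, map_smul]
    simp [hβdef, smul_eq_mul]
  have hβpos : 0 < β := by
    have h1 : ((0 : X), (1 : ℝ)) ∈ U := by simp [hU, hp0]
    have := hf _ h1
    rw [hf0] at this
    exact this
  have hkey : ∀ v : X, 0 ≤ f (v, 0) + β * p v := by
    intro v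
    by_contra h
    push_neg at h
    set ε : ℝ := -(f (v, 0) + β * p v) / β with hεdef
    have hεpos : 0 < ε := div_pos (by linarith) hβpos
    have hmem : (v, p v + ε) ∈ U := by
      simp only [hU, mem_setOf_eq]
      linarith
    have := hf _ hmem
    rw [hf0, hsplit] at this
    have : 0 < f (v, 0) + (p v + ε) * β := this
    have hεβ : ε * β = -(f (v, 0) + β * p v) := by
      rw [hεdef]; field_simp
    nlinarith
  set xs : X →L[ℝ] ℝ := (-β⁻¹) • (f.comp (ContinuousLinearMap.inl ℝ X ℝ)) with hxsdef
  have hxsval : ∀ v : X, xs v = -β⁻¹ * f (v, 0) := by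
    intro v
    simp [hxsdef, ContinuousLinearMap.inl]
  have hxsle : ∀ v : X, xs v ≤ p v := by
    intro v
    rw [hxsval]
    have := hkey v
    have hβ' : 0 < β⁻¹ := inv_pos.2 hβpos
    have h1 : -β⁻¹ * f (v, 0) ≤ -β⁻¹ * (-(β * p v)) := by
      apply mul_le_mul_of_nonpos_left _ (by linarith)
      linarith
    have h2 : -β⁻¹ * (-(β * p v)) = p v := by
      field_simp
    linarith
  refine ⟨xs, ?_, ?_⟩
  · apply ContinuousLinearMap.opNorm_le_bound _ hs
    intro v
    rw [Real.norm_eq_abs, abs_le]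
    constructor
    · have h1 : xs (-v) ≤ p (-v) := hxsle (-v)
      have h2 : p (-v) ≤ s * ‖-v‖ := hpub (-v)
      rw [norm_neg] at h2
      have h3 : xs (-v) = -(xs v) := map_neg xs v
      linarith [h3 ▸ h1]
    · exact (hxsle v).trans ((hpub v).trans (le_of_eq rfl))
  · intro x
    rw [hφb]
    by_cases hx : φ x = ⊤
    · rw [hx, EReal.top_sub_coe]
      exact le_top
    · have hmem : x - xb ∈ D := by
        simp only [hD, mem_setOf_eq, add_sub_cancel]
        exact hx
      have h1 : xs (x - xb) ≤ g (x - xb) := (hxsle _).trans (hpg _ hmem)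
      have h2 : φ x - (r : EReal) = ((g (x - xb) : ℝ) : EReal) := by
        have := hg (x - xb) hmem
        rw [add_sub_cancel] at this
        rw [this, ← EReal.coe_sub]
        congr 1
        ring
      rw [h2]
      exact_mod_cast h1

theorem strong_slope_eq_dist_subdifferential
    {X : Type*} [NormedAddCommGroup X] [NormedSpace ℝ X] [CompleteSpace X]
    (φ : X → EReal) (xb : X)
    (hbot : ∀ x, φ x ≠ ⊥) (hdom : φ xb ≠ ⊤)
    (hconv : ∀ x y : X, ∀ t : ℝ, 0 ≤ t → t ≤ 1 →
      φ (t • x + (1 - t) • y) ≤ (t : EReal) * φ x + ((1 - t : ℝ) : EReal) * φ y)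
    (hlsc : LowerSemicontinuous φ) :
    limsup (fun x => ENNReal.ofReal ((φ xb - φ x).toReal / ‖x - xb‖)) (𝓝[≠] xb)
      = EMetric.infEdist 0
          {xs : StrongDual ℝ X | ∀ x, ((xs (x - xb) : ℝ) : EReal) ≤ φ x - φ xb} := by
  classical
  set r : ℝ := (φ xb).toReal with hrdef
  have hφb : φ xb = (r : EReal) := (EReal.coe_toReal hdom (hbot xb)).symm
  set S := {xs : StrongDual ℝ X | ∀ x, ((xs (x - xb) : ℝ) : EReal) ≤ φ x - φ xb} with hS
  set F := fun x => ENNReal.ofReal ((φ xb - φ x).toReal / ‖x - xb‖) with hF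
  apply le_antisymm
  · -- limsup ≤ infEdist
    rw [show @EMetric.infEdist = @Metric.infEDist from rfl, EMetric.le_infEdist]
    intro xs hxs
    apply limsup_le_of_le (by isBoundedDefault)
    apply Eventually.of_forall
    intro x
    have hpt : (φ xb - φ x).toReal / ‖x - xb‖ ≤ ‖xs‖ := by
      by_cases hzero : ‖x - xb‖ = 0
      · rw [hzero, div_zero]
        exact norm_nonneg _
      · have hpos : 0 < ‖x - xb‖ := lt_of_le_of_ne (norm_nonneg _) (Ne.symm hzero)
        rw [div_le_iff₀ hpos]
        by_cases hx : φ x = ⊤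
        · have : φ xb - φ x = ⊥ := by rw [hx]; exact EReal.sub_top _
          rw [this]
          simp only [EReal.toReal_bot]
          positivity
        · have hφx : φ x = (((φ x).toReal : ℝ) : EReal) := (EReal.coe_toReal hx (hbot x)).symm
          set a : ℝ := (φ x).toReal
          have hsub := hxs x
          rw [hφx, hφb, ← EReal.coe_sub] at hsub
          have h1 : xs (x - xb) ≤ a - r := EReal.coe_le_coe_iff.1 hsub
          have h2 : (φ xb - φ x).toReal = r - a := by
            rw [hφb, hφx, ← EReal.coe_sub, EReal.toReal_coe]
          rw [h2]
          have h3 : r - a ≤ -(xs (x - xb)) := by linarith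
          have h4 : -(xs (x - xb)) ≤ |xs (x - xb)| := neg_le_abs _
          have h5 : |xs (x - xb)| ≤ ‖xs‖ * ‖x - xb‖ := xs.le_opNorm _
          linarith
    calc F x ≤ ENNReal.ofReal ‖xs‖ := ENNReal.ofReal_le_ofReal hpt
      _ = edist 0 xs := by
          rw [edist_dist, dist_zero_left]
  · -- infEdist ≤ limsup
    set L := limsup F (𝓝[≠] xb) with hL
    by_cases hLtop : L = ⊤
    · rw [hLtop]; exact le_top
    set s : ℝ := L.toReal with hsdef
    have hs0 : 0 ≤ s := ENNReal.toReal_nonneg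
    -- global lower bound
    have B1 : ∀ x, ((r - s * ‖x - xb‖ : ℝ) : EReal) ≤ φ x := by
      intro x
      by_cases hx : φ x = ⊤
      · rw [hx]; exact le_top
      · have hφx : φ x = (((φ x).toReal : ℝ) : EReal) := (EReal.coe_toReal hx (hbot x)).symm
        set a : ℝ := (φ x).toReal with hadef
        rw [hφx, EReal.coe_le_coe_iff]
        by_contra h
        push_neg at h
        -- a < r - s * ‖x - xb‖
        have hxne : x ≠ xb := by
          intro heq
          rw [heq] at hadef
          have : a = r := by rw [hadef, hrdef]
          rw [heq] at h
          simp only [sub_self, norm_zero, mul_zero, sub_zero] at h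
          linarith
        have hnpos : 0 < ‖x - xb‖ := by
          rw [norm_pos_iff, sub_ne_zero]; exact hxne
        set Q : ℝ := (r - a) / ‖x - xb‖ with hQdef
        have hQs : s < Q := by
          rw [hQdef, lt_div_iff₀ hnpos]
          nlinarith
        have hQpos : 0 < Q := lt_of_le_of_lt hs0 hQs
        -- show ofReal Q ≤ L via frequently
        have hfreq : ∃ᶠ y in 𝓝[≠] xb, ENNReal.ofReal Q ≤ F y := by
          set T : ℝ → X := fun t => xb + t • (x - xb) with hT
          have htend : Tendsto T (𝓝[>] (0:ℝ)) (𝓝[≠] xb) := by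
            rw [tendsto_nhdsWithin_iff]
            constructor
            · have hTc : Continuous T := by
                rw [hT]
                exact continuous_const.add (continuous_id.smul continuous_const)
              have h0 : T 0 = xb := by simp [hT]
              have h1 : Tendsto T (𝓝 (0:ℝ)) (𝓝 xb) := by
                have h2 := hTc.tendsto 0
                rwa [h0] at h2
              exact h1.mono_left nhdsWithin_le_nhds
            · filter_upwards [self_mem_nhdsWithin] with t ht
              simp only [mem_compl_iff, mem_singleton_iff, hT]
              intro heq
              have : t • (x - xb) = 0 := by
                have := heq
                rwa [add_eq_left] at this
              rcases smul_eq_zero.1 this with h | h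
              · exact absurd h (ne_of_gt (mem_Ioi.1 ht))
              · rw [sub_eq_zero] at h; exact hxne h
          apply htend.frequently
          apply Eventually.frequently
          filter_upwards [Ioc_mem_nhdsGT_of_mem (by simp : (0:ℝ) ∈ Ico (0:ℝ) 1)] with t ht
          obtain ⟨ht0, ht1⟩ := ht
          have hc := hconv x xb t ht0.le ht1
          have heq : t • x + (1 - t) • xb = T t := by
            simp only [hT]; module
          rw [heq, hφx, hφb, ← EReal.coe_mul, ← EReal.coe_mul, ← EReal.coe_add] at hc
          have hTtop : φ (T t) ≠ ⊤ := by
            intro htop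
            rw [htop] at hc
            exact (EReal.coe_ne_top _) (top_le_iff.1 hc)
          have hTb : φ (T t) = (((φ (T t)).toReal : ℝ) : EReal) := (EReal.coe_toReal hTtop (hbot _)).symm
          set b : ℝ := (φ (T t)).toReal with hbdef
          have hble : b ≤ t * a + (1 - t) * r := by
            rw [hTb] at hc
            exact EReal.coe_le_coe_iff.1 hc
          have hnum : (φ xb - φ (T t)).toReal = r - b := by
            rw [hφb, hTb, ← EReal.coe_sub, EReal.toReal_coe]
          have hden : ‖T t - xb‖ = t * ‖x - xb‖ := by
            simp only [hT, add_sub_cancel_left, norm_smul, Real.norm_eq_abs,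
              abs_of_pos ht0]
          have hdpos : 0 < t * ‖x - xb‖ := mul_pos ht0 hnpos
          have hQle' : Q ≤ (φ xb - φ (T t)).toReal / ‖T t - xb‖ := by
            rw [hnum, hden, le_div_iff₀ hdpos]
            have hQn : Q * ‖x - xb‖ = r - a := by
              rw [hQdef, div_mul_cancel₀ _ (ne_of_gt hnpos)]
            nlinarith
          exact ENNReal.ofReal_le_ofReal hQle'
        have := le_limsup_of_frequently_le' hfreq
        rw [← hL] at this
        have hQle : Q ≤ s := by
          have h2 : ENNReal.ofReal Q ≤ L := this
          have := ENNReal.toReal_mono hLtop h2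
          rwa [ENNReal.toReal_ofReal hQpos.le] at this
        linarith
    obtain ⟨xs, hnorm, hsub⟩ := exists_subgradient_aux φ xb r s hs0 hφb hconv B1
    have hmem : xs ∈ S := hsub
    calc EMetric.infEdist 0 S ≤ edist 0 xs := EMetric.infEdist_le_edist_of_mem hmem
      _ = ENNReal.ofReal ‖xs‖ := by rw [edist_dist, dist_zero_left]
      _ ≤ ENNReal.ofReal s := ENNReal.ofReal_le_ofReal hnorm
      _ = L := ENNReal.ofReal_toReal hLtop
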